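/- Multi-lottery optimal-bet formula (Corollary: unconditional case with fair odds): for a full-support PMF p⁰ on finite X, d fair odds functions o¹,…,o^d (each with ∑ₓ 1/oᵏ(x) = 1), and risk-aversion vector R = (R₁,…,R_d) with all Rₖ ≥ 1 (not all equal to 1), setting α₀ = (1 + ∑ₖ(Rₖ−1))⁻¹ and αₖ = (Rₖ−1)α₀, the supremum over d-tuples of PMFs (b¹,…,b^d) of ( ∑ₖ(1−Rₖ) )⁻¹ · log ∑ₓ p⁰(x) ∏ₖ (bᵏ(x)oᵏ(x))^{1−Rₖ} equals the multivariate Rényi divergence D_α(p⁰, (o¹)⁻¹, …, (o^d)⁻¹). -/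

import Mathlib

open Finset Real

/-- Multi-lottery optimal betting with fair odds (Corollary `c:c3`):
with `α₀ = (1 + ∑ₖ(Rₖ−1))⁻¹` and `αₖ = (Rₖ−1)α₀`, the maximum of the log
isoelastic certainty equivalent over all `d`-tuples of full-support betting
strategies equals the multivariate Rényi divergence
`D_α(p⁰, (o¹)⁻¹, …, (o^d)⁻¹)`. -/
theorem multi_lottery_optimal_betting_fair_odds
    {X : Type*} [Fintype X] [Nonempty X] (d : ℕ)
    (p0 : X → ℝ) (o : Fin d → X → ℝ) (R : Fin d → ℝ)
    (hp0_pos : ∀ x, 0 < p0 x) (hp0_sum : ∑ x, p0 x = 1)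
    (ho_pos : ∀ k x, 0 < o k x) (ho_fair : ∀ k, ∑ x, 1 / o k x = 1)
    (hR : ∀ k, 1 ≤ R k) (hRsum : (d : ℝ) < ∑ k, R k) :
    IsGreatest
      {v : ℝ | ∃ b : Fin d → X → ℝ,
        (∀ k x, 0 < b k x) ∧ (∀ k, ∑ x, b k x = 1) ∧
        v = (∑ k, (1 - R k))⁻¹ *
          Real.log (∑ x, p0 x * ∏ k, (b k x * o k x) ^ (1 - R k))}
      ((((1 + ∑ k, (R k - 1))⁻¹) - 1)⁻¹ *
        Real.log (∑ x, (p0 x) ^ ((1 + ∑ k, (R k - 1))⁻¹) *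
          ∏ k, (1 / o k x) ^ ((R k - 1) * (1 + ∑ k', (R k' - 1))⁻¹))) := by
  classical
  set S : ℝ := ∑ k, (R k - 1) with hSdef
  have hsum1R : ∑ k, (1 - R k) = -S := by
    rw [hSdef]; simp only [Finset.sum_sub_distrib]; ring
  have hSpos : 0 < S := by
    have hd : ∑ _k : Fin d, (1 : ℝ) = d := by simp
    have : S = (∑ k, R k) - d := by
      rw [hSdef]; simp only [Finset.sum_sub_distrib, hd]
    rw [this]; linarith
  have h1S : (0 : ℝ) < 1 + S := by linarith
  set α : ℝ := (1 + S)⁻¹ with hαdef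
  have hαpos : 0 < α := inv_pos.mpr h1S
  set u : X → ℝ := fun x => p0 x * ∏ k, (o k x) ^ (1 - R k) with hudef
  have hupos : ∀ x, 0 < u x := fun x =>
    mul_pos (hp0_pos x) (Finset.prod_pos fun k _ => Real.rpow_pos_of_pos (ho_pos k x) _)
  set T : ℝ := ∑ x, u x ^ α with hTdef
  have hTpos : 0 < T :=
    Finset.sum_pos (fun x _ => Real.rpow_pos_of_pos (hupos x) _) Finset.univ_nonempty
  -- the target log-sum equals T
  have hTeq : (∑ x, (p0 x) ^ α * ∏ k, (1 / o k x) ^ ((R k - 1) * α)) = T := by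
    rw [hTdef]
    refine Finset.sum_congr rfl fun x _ => ?_
    simp only [hudef]
    rw [Real.mul_rpow (hp0_pos x).le
        (Finset.prod_nonneg fun k _ => (Real.rpow_pos_of_pos (ho_pos k x) _).le),
      ← Real.finset_prod_rpow _ _ (fun k _ => (Real.rpow_pos_of_pos (ho_pos k x) _).le) α]
    congr 1
    refine Finset.prod_congr rfl fun k _ => ?_
    rw [← Real.rpow_mul (ho_pos k x).le, one_div, Real.inv_rpow (ho_pos k x).le,
      ← Real.rpow_neg (ho_pos k x).le]
    congr 1; ring
  -- product of a constant times odds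
  have hprod_const : ∀ (c : ℝ), 0 < c → ∀ x : X,
      ∏ k, (c * o k x) ^ (1 - R k) = c ^ (-S) * ∏ k, (o k x) ^ (1 - R k) := by
    intro c hc x
    rw [← hsum1R, Real.rpow_sum_of_pos hc, ← Finset.prod_mul_distrib]
    exact Finset.prod_congr rfl fun k _ => Real.mul_rpow hc.le (ho_pos k x).le
  have hαS : α * -S + 1 = α := by
    rw [hαdef]; field_simp; ring
  constructor
  · -- membership: optimal bet b k x = u x ^ α / T
    refine ⟨fun _ x => u x ^ α / T,
      fun k x => div_pos (Real.rpow_pos_of_pos (hupos x) _) hTpos,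
      fun k => by rw [← Finset.sum_div, ← hTdef, div_self hTpos.ne'], ?_⟩
    have hcpow : ∀ x : X, (u x ^ α / T) ^ (-S) = u x ^ (α * -S) * T ^ S := by
      intro x
      rw [Real.div_rpow (Real.rpow_pos_of_pos (hupos x) _).le hTpos.le,
        ← Real.rpow_mul (hupos x).le, Real.rpow_neg hTpos.le, div_eq_mul_inv, inv_inv]
    have hupow : ∀ x : X, u x ^ (α * -S) * u x = u x ^ α := by
      intro x
      nth_rewrite 2 [← Real.rpow_one (u x)]
      rw [← Real.rpow_add (hupos x), hαS]
    have hxeq : ∀ x : X,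
        p0 x * ∏ k, ((u x ^ α / T) * o k x) ^ (1 - R k) = T ^ S * u x ^ α := by
      intro x
      rw [hprod_const _ (div_pos (Real.rpow_pos_of_pos (hupos x) _) hTpos) x,
        hcpow x, ← hupow x]
      simp only [hudef]
      ring
    have hsum_eq :
        (∑ x, p0 x * ∏ k, ((u x ^ α / T) * o k x) ^ (1 - R k)) = T ^ (S + 1) := by
      simp only [hxeq]
      rw [← Finset.mul_sum, ← hTdef, Real.rpow_add hTpos, Real.rpow_one]
    rw [hsum1R, hTeq, hsum_eq, Real.log_rpow hTpos]
    have hc : (α - 1)⁻¹ = -((1 + S) / S) := by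
      have h1 : α - 1 = -S / (1 + S) := by rw [hαdef]; field_simp; ring
      rw [h1, neg_div, inv_neg, inv_div]
    rw [hc, inv_neg, div_eq_mul_inv]
    ring
  · -- upper bound
    rintro v ⟨b, hbpos, hbsum, hveq⟩
    set a : X → ℝ := fun x => p0 x * ∏ k, (b k x * o k x) ^ (1 - R k) with hadef
    have hapos : ∀ x, 0 < a x := fun x =>
      mul_pos (hp0_pos x) (Finset.prod_pos fun k _ =>
        Real.rpow_pos_of_pos (mul_pos (hbpos k x) (ho_pos k x)) _)
    set A : ℝ := ∑ x, a x with hAdef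
    have hApos : 0 < A := Finset.sum_pos (fun x _ => hapos x) Finset.univ_nonempty
    -- key pointwise identity
    have hkey : ∀ x, u x ^ α = a x ^ α * ∏ k, b k x ^ ((R k - 1) * α) := by
      intro x
      have hfac : ∀ k : Fin d,
          ((b k x * o k x) ^ (1 - R k)) ^ α * b k x ^ ((R k - 1) * α)
            = ((o k x) ^ (1 - R k)) ^ α := by
        intro k
        rw [← Real.rpow_mul (mul_pos (hbpos k x) (ho_pos k x)).le,
          ← Real.rpow_mul (ho_pos k x).le,
          Real.mul_rpow (hbpos k x).le (ho_pos k x).le,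
          mul_right_comm, ← Real.rpow_add (hbpos k x),
          show (1 - R k) * α + (R k - 1) * α = 0 from by ring,
          Real.rpow_zero, one_mul]
      simp only [hudef, hadef]
      rw [Real.mul_rpow (hp0_pos x).le
          (Finset.prod_nonneg fun k _ => (Real.rpow_pos_of_pos (ho_pos k x) _).le),
        Real.mul_rpow (hp0_pos x).le
          (Finset.prod_nonneg fun k _ =>
            (Real.rpow_pos_of_pos (mul_pos (hbpos k x) (ho_pos k x)) _).le),
        ← Real.finset_prod_rpow _ _
          (fun k _ => (Real.rpow_pos_of_pos (ho_pos k x) _).le) α,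
        ← Real.finset_prod_rpow _ _
          (fun k _ => (Real.rpow_pos_of_pos (mul_pos (hbpos k x) (ho_pos k x)) _).le) α,
        mul_assoc, ← Finset.prod_mul_distrib]
      congr 1
      exact Finset.prod_congr rfl fun k _ => (hfac k).symm
    -- AM-GM (generalized Hölder) step
    have hxle : ∀ x, u x ^ α ≤
        A ^ α * (α * (a x / A) + ∑ k, ((R k - 1) * α) * b k x) := by
      intro x
      have hgm := Real.geom_mean_le_arith_mean_weighted Finset.univ
        (Fin.cons α (fun k => (R k - 1) * α))
        (Fin.cons (a x / A) (fun k => b k x))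
        (fun i _ => by
          refine Fin.cases ?_ (fun k => ?_) i
          · simpa using hαpos.le
          · simp only [Fin.cons_succ]
            exact mul_nonneg (by linarith [hR k]) hαpos.le)
        (by
          rw [Fin.sum_cons, ← Finset.sum_mul, ← hSdef, hαdef]
          field_simp)
        (fun i _ => by
          refine Fin.cases ?_ (fun k => ?_) i
          · simpa using (div_pos (hapos x) hApos).le
          · simp only [Fin.cons_succ]
            exact (hbpos k x).le)
      rw [Fin.prod_univ_succ, Fin.sum_univ_succ] at hgm
      simp only [Fin.cons_succ, Fin.cons_zero] at hgm
      have haA : a x ^ α = A ^ α * (a x / A) ^ α := by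
        rw [Real.div_rpow (hapos x).le hApos.le]
        field_simp
      calc u x ^ α = a x ^ α * ∏ k, b k x ^ ((R k - 1) * α) := hkey x
        _ = A ^ α * ((a x / A) ^ α * ∏ k, b k x ^ ((R k - 1) * α)) := by
            rw [haA]; ring
        _ ≤ A ^ α * (α * (a x / A) + ∑ k, ((R k - 1) * α) * b k x) := by
            apply mul_le_mul_of_nonneg_left _ (Real.rpow_pos_of_pos hApos α).le
            exact hgm
    have hTA : T ≤ A ^ α := by
      have hsum1 : ∑ x, (α * (a x / A) + ∑ k, ((R k - 1) * α) * b k x) = 1 := by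
        rw [Finset.sum_add_distrib]
        have e1 : ∑ x, α * (a x / A) = α := by
          rw [← Finset.mul_sum, ← Finset.sum_div, ← hAdef, div_self hApos.ne', mul_one]
        have e2 : ∑ x, ∑ k, ((R k - 1) * α) * b k x = S * α := by
          rw [Finset.sum_comm]
          rw [Finset.sum_congr rfl fun k _ => by
            rw [← Finset.mul_sum, hbsum k, mul_one]]
          rw [← Finset.sum_mul, ← hSdef]
        rw [e1, e2, hαdef]
        field_simp
      calc T = ∑ x, u x ^ α := hTdef
        _ ≤ ∑ x, A ^ α * (α * (a x / A) + ∑ k, ((R k - 1) * α) * b k x) :=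
            Finset.sum_le_sum fun x _ => hxle x
        _ = A ^ α := by rw [← Finset.mul_sum, hsum1, mul_one]
    have hlog : Real.log T ≤ α * Real.log A :=
      (Real.log_le_log hTpos hTA).trans_eq (Real.log_rpow hApos α)
    rw [hveq, hsum1R, hTeq]
    have hc : (α - 1)⁻¹ = -((1 + S) / S) := by
      have h1 : α - 1 = -S / (1 + S) := by rw [hαdef]; field_simp; ring
      rw [h1, neg_div, inv_neg, inv_div]
    rw [hc]
    have h2 : (1 + S) * Real.log T ≤ Real.log A := by
      have := mul_le_mul_of_nonneg_left hlog h1S.le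
      rw [hαdef] at this
      rwa [← mul_assoc, mul_inv_cancel₀ h1S.ne', one_mul] at this
    rw [inv_neg, neg_mul, neg_mul, neg_le_neg_iff, div_mul_eq_mul_div,
      inv_mul_eq_div]
    exact (div_le_div_iff_of_pos_right hSpos).mpr h2
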